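/- The coefficient function N(q_1, q_2, m, n, p) defined by the sum over x from 0 to p of (-1)^{p-x} C(p,x) [m+q_1-1]_{p-x} [-m+q_1-1]_x [n+q_2-1]_x [-n+q_2-1]_{p-x} equals the sum over x from 0 to p of (-1)^{p-x} C(p,x) [2q_2-2-x]_{p-x} (2q_1-1-p)_x [m+q_1-1]_{p-x} [n+q_2-1]_x, for all rational (or real) q_1, q_2, m, n and natural number p. -/

import Mathlib

/-- The coefficient function `N(q₁, q₂, m, n, p)` of the deformed `W̃₁₊∞` algebra. -/
noncomputable def Ncoef (q₁ q₂ m n : ℚ) (p : ℕ) : ℚ :=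
  ∑ x ∈ Finset.range (p + 1),
    (-1 : ℚ) ^ (p - x) * (p.choose x : ℚ) *
      (descPochhammer ℚ (p - x)).eval (m + q₁ - 1) *
      (descPochhammer ℚ x).eval (-m + q₁ - 1) *
      (descPochhammer ℚ x).eval (n + q₂ - 1) *
      (descPochhammer ℚ (p - x)).eval (-n + q₂ - 1)

open Finset Polynomial


/-- Abbreviation for evaluated falling factorial. -/
noncomputable def dP (k : ℕ) (a : ℚ) : ℚ := (descPochhammer ℚ k).eval a

lemma dP_def (k : ℕ) (a : ℚ) : (descPochhammer ℚ k).eval a = dP k a := rfl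

lemma dP_succ (k : ℕ) (a : ℚ) : dP (k + 1) a = dP k a * (a - k) := by
  simp [dP, descPochhammer_succ_eval]

lemma dP_concat (n m : ℕ) (a : ℚ) : dP n a * dP m (a - n) = dP (n + m) a := by
  have h := congrArg (Polynomial.eval a) (descPochhammer_mul (R := ℚ) n m)
  simpa [dP, Polynomial.eval_comp] using h

/-- Vandermonde's identity for falling factorials. -/
lemma dP_vand (n : ℕ) (a b : ℚ) :
    dP n (a + b) = ∑ j ∈ range (n + 1),
      (n.choose j : ℚ) * dP j a * dP (n - j) b := by
  induction n with
  | zero => simp [dP]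
  | succ n ih =>
    have key : dP (n + 1) (a + b) = dP n (a + b) * (a + b - n) := dP_succ n (a + b)
    rw [key, ih, Finset.sum_mul]
    have step : ∀ j ∈ range (n + 1),
        (n.choose j : ℚ) * dP j a * dP (n - j) b * (a + b - n)
          = (n.choose j : ℚ) * dP (j + 1) a * dP (n - j) b
            + (n.choose j : ℚ) * dP j a * dP (n - j + 1) b := by
      intro j hj
      have hjn : j ≤ n := by simpa [Nat.lt_succ_iff] using hj
      have hcast : ((n - j : ℕ) : ℚ) = (n : ℚ) - j := by
        push_cast [Nat.cast_sub hjn]; ring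
      rw [dP_succ j a, dP_succ (n - j) b, hcast]
      ring
    rw [Finset.sum_congr rfl step, Finset.sum_add_distrib]
    -- second sum: peel off j = 0
    have h2 : (∑ j ∈ range (n + 1), (n.choose j : ℚ) * dP j a * dP (n - j + 1) b)
        = (∑ j ∈ range n, (n.choose (j + 1) : ℚ) * dP (j + 1) a * dP (n - (j+1) + 1) b)
          + dP (n + 1) b := by
      rw [Finset.sum_range_succ' (fun j => (n.choose j : ℚ) * dP j a * dP (n - j + 1) b) n]
      simp [dP]
    -- RHS: peel off j = 0
    rw [h2, Finset.sum_range_succ' (fun j => ((n+1).choose j : ℚ) * dP j a * dP (n + 1 - j) b) (n+1)]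
    have h3 : ∀ j ∈ range (n + 1),
        (((n+1).choose (j+1) : ℚ)) * dP (j+1) a * dP (n + 1 - (j+1)) b
          = (n.choose j : ℚ) * dP (j + 1) a * dP (n - j) b
            + (n.choose (j+1) : ℚ) * dP (j + 1) a * dP (n - j) b := by
      intro j hj
      have : (n+1).choose (j+1) = n.choose j + n.choose (j+1) := Nat.choose_succ_succ n j
      rw [this]
      have : n + 1 - (j + 1) = n - j := by omega
      rw [this]
      push_cast
      ring
    rw [Finset.sum_congr rfl h3, Finset.sum_add_distrib]
    have h4 : (∑ j ∈ range (n + 1), (n.choose (j+1) : ℚ) * dP (j + 1) a * dP (n - j) b)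
        = ∑ j ∈ range n, (n.choose (j + 1) : ℚ) * dP (j + 1) a * dP (n - (j+1) + 1) b := by
      rw [Finset.sum_range_succ]
      have : (n.choose (n+1) : ℚ) = 0 := by simp [Nat.choose_eq_zero_of_lt]
      rw [this]
      simp only [zero_mul, add_zero]
      refine Finset.sum_congr rfl fun j hj => ?_
      have hjn : j < n := mem_range.mp hj
      have : n - (j + 1) + 1 = n - j := by omega
      rw [this]
    rw [h4]
    simp [dP]
    ring


lemma neg_one_pow_sub' {n y : ℕ} (h : y ≤ n) :
    ((-1 : ℚ)) ^ (n - y) = (-1 : ℚ) ^ n * (-1 : ℚ) ^ y := by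
  have h1 : (-1 : ℚ) ^ (n - y) * (-1 : ℚ) ^ y = (-1 : ℚ) ^ n := by
    rw [← pow_add]; congr 1; omega
  have h2 : ((-1 : ℚ) ^ y) * ((-1 : ℚ) ^ y) = 1 := by
    rw [← pow_add]; exact Even.neg_one_pow ⟨y, rfl⟩
  calc (-1 : ℚ) ^ (n - y) = (-1 : ℚ) ^ (n - y) * ((-1 : ℚ)^y * (-1:ℚ)^y) := by rw [h2, mul_one]
    _ = (-1 : ℚ) ^ n * (-1 : ℚ) ^ y := by rw [← mul_assoc, h1]

lemma alt_sum_choose (m N : ℕ) (h : m ≤ N) :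
    (∑ y ∈ range (N + 1), (-1 : ℚ) ^ y * (m.choose y : ℚ))
      = if m = 0 then 1 else 0 := by
  have hsub : range (m + 1) ⊆ range (N + 1) := Finset.range_subset_range.mpr (by omega)
  rw [← Finset.sum_subset hsub (fun y _ hy => by
    rw [Nat.choose_eq_zero_of_lt (by simpa [Nat.lt_succ_iff, not_lt] using hy : m < y)]
    simp)]
  have := congrArg (fun z : ℤ => (z : ℚ)) (Int.alternating_sum_range_choose (n := m))
  push_cast at this
  simpa using this

/-- The collapsing alternating triple-binomial sum. -/
lemma Wsum (p j k : ℕ) :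
    (∑ x ∈ range (p + 1), (-1 : ℚ) ^ (p - x) * (p.choose x : ℚ) *
      ((p - x).choose j : ℚ) * (x.choose k : ℚ))
    = if j + k = p then (-1 : ℚ) ^ j * (p.choose j : ℚ) else 0 := by
  by_cases hjk : p < j + k
  · rw [if_neg (by omega)]
    refine Finset.sum_eq_zero fun x hx => ?_
    have hx' : x ≤ p := by simpa [Nat.lt_succ_iff] using hx
    by_cases hkx : k ≤ x
    · rw [Nat.choose_eq_zero_of_lt (by omega : p - x < j)]; simp
    · rw [Nat.choose_eq_zero_of_lt (by omega : x < k)]; simp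
  · push_neg at hjk
    have step : ∀ x ∈ range (p + 1),
        (-1 : ℚ) ^ (p - x) * (p.choose x : ℚ) * ((p - x).choose j : ℚ) * (x.choose k : ℚ)
        = (-1 : ℚ) ^ (p - x) * ((p.choose k : ℚ) * ((p - k).choose j : ℚ)) *
            (if k ≤ x then ((p - k - j).choose (x - k) : ℚ) else 0) := by
      intro x hx
      have hxp : x ≤ p := by simpa [Nat.lt_succ_iff] using hx
      by_cases hkx : k ≤ x
      · rw [if_pos hkx]
        by_cases hxj : x ≤ p - j
        · have key : p.choose x * (p - x).choose j * x.choose k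
              = p.choose k * (p - k).choose j * ((p - k - j).choose (x - k)) := by
            have e1 : p.choose x * x.choose k = p.choose k * (p - k).choose (x - k) :=
              Nat.choose_mul hkx
            have e2 : (p - k).choose (x - k) = (p - k).choose (p - x) := by
              rw [← Nat.choose_symm (show p - x ≤ p - k by omega)]
              congr 1; omega
            have e3 : (p - k).choose (p - x) * (p - x).choose j
                = (p - k).choose j * ((p - k) - j).choose ((p - x) - j) :=
              Nat.choose_mul (by omega)
            have e4 : ((p - k) - j).choose ((p - x) - j) = (p - k - j).choose (x - k) := by
              rw [show (p : ℕ) - x - j = (p - k - j) - (x - k) by omega,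
                Nat.choose_symm (by omega : x - k ≤ p - k - j)]
            calc p.choose x * (p - x).choose j * x.choose k
                = (p.choose x * x.choose k) * (p - x).choose j := by ring
              _ = p.choose k * ((p - k).choose (p - x) * (p - x).choose j) := by
                  rw [e1, e2]; ring
              _ = p.choose k * ((p - k).choose j * (p - k - j).choose (x - k)) := by
                  rw [e3, e4]
              _ = _ := by ring
          have keyQ := congrArg (fun z : ℕ => (z : ℚ)) key
          push_cast at keyQ
          calc (-1 : ℚ) ^ (p - x) * (p.choose x : ℚ) * ((p - x).choose j : ℚ) * (x.choose k : ℚ)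
              = (-1 : ℚ) ^ (p - x) * ((p.choose x : ℚ) * ((p - x).choose j : ℚ) * (x.choose k : ℚ)) := by ring
            _ = (-1 : ℚ) ^ (p - x) * ((p.choose k : ℚ) * ((p - k).choose j : ℚ) * ((p - k - j).choose (x - k) : ℚ)) := by rw [keyQ]
            _ = _ := by ring
        · rw [Nat.choose_eq_zero_of_lt (by omega : p - x < j),
            Nat.choose_eq_zero_of_lt (by omega : p - k - j < x - k)]
          simp
      · rw [if_neg hkx, Nat.choose_eq_zero_of_lt (by omega : x < k)]; simp
    rw [Finset.sum_congr rfl step]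
    have hkp : k ≤ p := by omega
    rw [Finset.range_eq_Ico, ← Finset.sum_Ico_consecutive _ (Nat.zero_le k) (by omega : k ≤ p + 1)]
    have first0 : (∑ x ∈ Finset.Ico 0 k, (-1 : ℚ) ^ (p - x) *
        ((p.choose k : ℚ) * ((p - k).choose j : ℚ)) *
        (if k ≤ x then ((p - k - j).choose (x - k) : ℚ) else 0)) = 0 := by
      refine Finset.sum_eq_zero fun x hx => ?_
      rw [if_neg (by simpa using (Finset.mem_Ico.mp hx).2 |>.not_ge), mul_zero]
    rw [first0, zero_add, Finset.sum_Ico_eq_sum_range]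
    have e5 : ∀ y ∈ range (p + 1 - k),
        (-1 : ℚ) ^ (p - (k + y)) * ((p.choose k : ℚ) * ((p - k).choose j : ℚ)) *
          (if k ≤ k + y then ((p - k - j).choose (k + y - k) : ℚ) else 0)
        = (-1 : ℚ) ^ (p - k) * ((p.choose k : ℚ) * ((p - k).choose j : ℚ)) *
            ((-1 : ℚ) ^ y * ((p - k - j).choose y : ℚ)) := by
      intro y hy
      have hyp : y ≤ p - k := by have := mem_range.mp hy; omega
      rw [if_pos (Nat.le_add_right _ _)]
      have : k + y - k = y := by omega
      rw [this]
      have : p - (k + y) = (p - k) - y := by omega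
      rw [this, neg_one_pow_sub' hyp]
      ring
    rw [Finset.sum_congr rfl e5, ← Finset.mul_sum]
    have : p + 1 - k = (p - k) + 1 := by omega
    rw [this, alt_sum_choose (p - k - j) (p - k) (by omega)]
    by_cases hfin : j + k = p
    · rw [if_pos (by omega), if_pos hfin, mul_one]
      have h1 : p - k = j := by omega
      have h2 : (p - k).choose j = 1 := by rw [h1, Nat.choose_self]
      have h3 : p.choose k = p.choose j := by
        rw [show k = p - j by omega, Nat.choose_symm (by omega)]
      rw [h1, Nat.choose_self, h3]
      ring
    · rw [if_neg (by omega), if_neg hfin, mul_zero]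
/-- Key rearrangement: combining the two binomial transforms with the
alternating outer sum collapses to a single diagonal sum. -/
lemma key_swap (p : ℕ) (G H : ℕ → ℚ) :
    (∑ x ∈ range (p + 1), (-1 : ℚ) ^ (p - x) * (p.choose x : ℚ) *
      (∑ j ∈ range (p + 1), ((p - x).choose j : ℚ) * G j) *
      (∑ k ∈ range (p + 1), (x.choose k : ℚ) * H k))
    = ∑ j ∈ range (p + 1), (-1 : ℚ) ^ j * (p.choose j : ℚ) * G j * H (p - j) := by
  have expand : ∀ x ∈ range (p + 1),
      (-1 : ℚ) ^ (p - x) * (p.choose x : ℚ) *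
        (∑ j ∈ range (p + 1), ((p - x).choose j : ℚ) * G j) *
        (∑ k ∈ range (p + 1), (x.choose k : ℚ) * H k)
      = ∑ j ∈ range (p + 1), ∑ k ∈ range (p + 1),
          ((-1 : ℚ) ^ (p - x) * (p.choose x : ℚ) * ((p - x).choose j : ℚ) *
            (x.choose k : ℚ)) * (G j * H k) := by
    intro x _
    calc (-1 : ℚ) ^ (p - x) * (p.choose x : ℚ) *
        (∑ j ∈ range (p + 1), ((p - x).choose j : ℚ) * G j) *
        (∑ k ∈ range (p + 1), (x.choose k : ℚ) * H k)
        = (∑ j ∈ range (p + 1), (-1 : ℚ) ^ (p - x) * (p.choose x : ℚ) *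
            (((p - x).choose j : ℚ) * G j)) *
          (∑ k ∈ range (p + 1), (x.choose k : ℚ) * H k) := by congr 1; rw [Finset.mul_sum]
      _ = _ := by
          rw [Finset.sum_mul]
          refine Finset.sum_congr rfl fun j _ => ?_
          rw [Finset.mul_sum]
          refine Finset.sum_congr rfl fun k _ => ?_
          ring
  rw [Finset.sum_congr rfl expand, Finset.sum_comm]
  have inner : ∀ j ∈ range (p + 1),
      (∑ x ∈ range (p + 1), ∑ k ∈ range (p + 1),
        ((-1 : ℚ) ^ (p - x) * (p.choose x : ℚ) * ((p - x).choose j : ℚ) *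
          (x.choose k : ℚ)) * (G j * H k))
      = (-1 : ℚ) ^ j * (p.choose j : ℚ) * G j * H (p - j) := by
    intro j hj
    have hjp : j ≤ p := by simpa [Nat.lt_succ_iff] using hj
    rw [Finset.sum_comm]
    have perk : ∀ k ∈ range (p + 1),
        (∑ x ∈ range (p + 1),
          ((-1 : ℚ) ^ (p - x) * (p.choose x : ℚ) * ((p - x).choose j : ℚ) *
            (x.choose k : ℚ)) * (G j * H k))
        = (if j + k = p then (-1 : ℚ) ^ j * (p.choose j : ℚ) else 0) * (G j * H k) := by
      intro k _
      rw [← Finset.sum_mul, Wsum]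
    rw [Finset.sum_congr rfl perk]
    rw [Finset.sum_eq_single_of_mem (p - j) (by simp [Nat.lt_succ_iff])]
    · rw [if_pos (by omega)]; ring
    · intro k _ hk
      rw [if_neg (by omega), zero_mul]
  rw [Finset.sum_congr rfl inner]

lemma asc_eval (x : ℕ) (s : ℚ) : (ascPochhammer ℚ x).eval s = dP x (s + x - 1) := by
  rw [dP, descPochhammer_eval_eq_ascPochhammer]
  congr 1; ring

/-- Alternative form of the coefficient function  (Lemma 3.4). -/
theorem Ncoef_eq_alternative_form (q₁ q₂ m n : ℚ) (p : ℕ) :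
    Ncoef q₁ q₂ m n p =
      ∑ x ∈ Finset.range (p + 1),
        (-1 : ℚ) ^ (p - x) * (p.choose x : ℚ) *
          (descPochhammer ℚ (p - x)).eval (2 * q₂ - 2 - x) *
          (ascPochhammer ℚ x).eval (2 * q₁ - 1 - p) *
          (descPochhammer ℚ (p - x)).eval (m + q₁ - 1) *
          (descPochhammer ℚ x).eval (n + q₂ - 1) := by
  set A : ℚ := m + q₁ - 1 with hA
  set B : ℚ := -m + q₁ - 1 with hB
  set C : ℚ := n + q₂ - 1 with hC
  set Dv : ℚ := -n + q₂ - 1 with hDv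
  set G : ℕ → ℚ := fun j => dP j Dv * dP (p - j) C with hG
  set H : ℕ → ℚ := fun k => dP k B * dP (p - k) A with hH
  -- Step 1: transform the RHS into the double-binomial-transform shape
  have rhs_eq : (∑ x ∈ Finset.range (p + 1),
        (-1 : ℚ) ^ (p - x) * (p.choose x : ℚ) *
          (descPochhammer ℚ (p - x)).eval (2 * q₂ - 2 - x) *
          (ascPochhammer ℚ x).eval (2 * q₁ - 1 - p) *
          (descPochhammer ℚ (p - x)).eval A *
          (descPochhammer ℚ x).eval C)
      = ∑ x ∈ range (p + 1), (-1 : ℚ) ^ (p - x) * (p.choose x : ℚ) *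
          (∑ j ∈ range (p + 1), ((p - x).choose j : ℚ) * G j) *
          (∑ k ∈ range (p + 1), (x.choose k : ℚ) * H k) := by
    refine Finset.sum_congr rfl fun x hx => ?_
    have hxp : x ≤ p := by simpa [Nat.lt_succ_iff] using hx
    rw [asc_eval]
    simp only [dP_def]
    have harg1 : (2 * q₂ - 2 - (x : ℚ)) = Dv + (C - x) := by rw [hC, hDv]; ring
    have harg2 : (2 * q₁ - 1 - (p : ℚ) + x - 1) = B + (A - ((p : ℚ) - x)) := by
      rw [hA, hB]; ring
    rw [harg1, harg2, dP_vand, dP_vand]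
    have hS1 : (∑ j ∈ range (p - x + 1),
          ((p - x).choose j : ℚ) * dP j Dv * dP (p - x - j) (C - x)) * dP x C
        = ∑ j ∈ range (p + 1), ((p - x).choose j : ℚ) * G j := by
      rw [Finset.sum_mul]
      have e : ∀ j ∈ range (p - x + 1),
          ((p - x).choose j : ℚ) * dP j Dv * dP (p - x - j) (C - x) * dP x C
            = ((p - x).choose j : ℚ) * G j := by
        intro j hj
        have hjx : j ≤ p - x := by simpa [Nat.lt_succ_iff] using hj
        have hc := dP_concat x (p - x - j) C
        have hidx : x + (p - x - j) = p - j := by omega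
        rw [hidx] at hc
        rw [hG]
        calc ((p - x).choose j : ℚ) * dP j Dv * dP (p - x - j) (C - x) * dP x C
            = ((p - x).choose j : ℚ) * dP j Dv * (dP x C * dP (p - x - j) (C - ↑x)) := by ring
          _ = ((p - x).choose j : ℚ) * (dP j Dv * dP (p - j) C) := by rw [hc]; ring
      rw [Finset.sum_congr rfl e]
      refine Finset.sum_subset (Finset.range_subset_range.mpr (by omega)) fun j _ hj => ?_
      have : p - x < j := by simpa [Nat.lt_succ_iff, not_le] using hj
      rw [Nat.choose_eq_zero_of_lt this]
      simp
    have hS2 : (∑ k ∈ range (x + 1),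
          (x.choose k : ℚ) * dP k B * dP (x - k) (A - ((p : ℚ) - x))) * dP (p - x) A
        = ∑ k ∈ range (p + 1), (x.choose k : ℚ) * H k := by
      rw [Finset.sum_mul]
      have e : ∀ k ∈ range (x + 1),
          (x.choose k : ℚ) * dP k B * dP (x - k) (A - ((p : ℚ) - x)) * dP (p - x) A
            = (x.choose k : ℚ) * H k := by
        intro k hk
        have hkx : k ≤ x := by simpa [Nat.lt_succ_iff] using hk
        have hcast : ((p : ℚ) - x) = ((p - x : ℕ) : ℚ) := by
          rw [Nat.cast_sub hxp]
        have hc := dP_concat (p - x) (x - k) A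
        have hidx : (p - x) + (x - k) = p - k := by omega
        rw [hidx] at hc
        rw [hH, hcast]
        calc (x.choose k : ℚ) * dP k B * dP (x - k) (A - ((p - x : ℕ) : ℚ)) * dP (p - x) A
            = (x.choose k : ℚ) * dP k B *
                (dP (p - x) A * dP (x - k) (A - ((p - x : ℕ) : ℚ))) := by ring
          _ = (x.choose k : ℚ) * (dP k B * dP (p - k) A) := by rw [hc]; ring
      rw [Finset.sum_congr rfl e]
      refine Finset.sum_subset (Finset.range_subset_range.mpr (by omega)) fun k _ hk => ?_
      have : x < k := by simpa [Nat.lt_succ_iff, not_le] using hk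
      rw [Nat.choose_eq_zero_of_lt this]
      simp
    calc (-1 : ℚ) ^ (p - x) * (p.choose x : ℚ) *
          (∑ j ∈ range (p - x + 1),
            ((p - x).choose j : ℚ) * dP j Dv * dP (p - x - j) (C - x)) *
          (∑ k ∈ range (x + 1),
            (x.choose k : ℚ) * dP k B * dP (x - k) (A - ((p : ℚ) - x))) *
          dP (p - x) A * dP x C
        = (-1 : ℚ) ^ (p - x) * (p.choose x : ℚ) *
            ((∑ j ∈ range (p - x + 1),
              ((p - x).choose j : ℚ) * dP j Dv * dP (p - x - j) (C - x)) * dP x C) *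
            ((∑ k ∈ range (x + 1),
              (x.choose k : ℚ) * dP k B * dP (x - k) (A - ((p : ℚ) - x))) * dP (p - x) A) := by
          ring
      _ = _ := by rw [hS1, hS2]
  rw [rhs_eq, key_swap]
  -- Step 2: the LHS equals the diagonal sum, by reflecting the index
  rw [Ncoef]
  simp only [dP_def]
  have hrefl := Finset.sum_range_reflect (fun x =>
    (-1 : ℚ) ^ (p - x) * (p.choose x : ℚ) * dP (p - x) A * dP x B * dP x C * dP (p - x) Dv)
    (p + 1)
  simp only [Nat.add_sub_cancel] at hrefl
  rw [← hrefl]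
  refine Finset.sum_congr rfl fun j hj => ?_
  have hjp : j ≤ p := by simpa [Nat.lt_succ_iff] using hj
  have h1 : p - (p - j) = j := by omega
  have h2 : p.choose (p - j) = p.choose j := Nat.choose_symm hjp
  simp only [hG, hH, h1, h2]
  ring
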